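/- Let α be irrational with ∑ W_n(α) = ∞, where W_n is defined as in the paper, and let 𝒟 = {n : a_{n+1} = 1 and a_n ≠ 1}. Then ∑_{n ∈ 𝒟ᶜ} W_n = ∞. -/

import Mathlib

open Filter

/-- The sequence `W_n` from the paper, built from the convergent denominators `q_n`. -/
noncomputable def Wseq (q : ℕ → ℝ) (n : ℕ) : ℝ :=
  if q (n + 1) < 2 * q n * Real.log (q n) then
    (Real.log (q (n + 1)) - Real.log (q n)) / Real.log (q n)
  else
    max 1 (Real.log (Real.log (q n)) -
        Real.log (Real.log (q (n + 1) / (q n * Real.log (q n))))) / Real.log (q n)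

section Aux

variable {a : ℕ → ℕ} {q : ℕ → ℝ}

lemma q_base (ha : ∀ n, 1 ≤ a n) (hq0 : q 0 = 1) (hq1 : q 1 = (a 1 : ℝ))
    (hqrec : ∀ n, 1 ≤ n → q (n + 1) = (a (n + 1) : ℝ) * q n + q (n - 1)) :
    ∀ n, 1 ≤ q n ∧ q n ≤ q (n + 1) := by
  intro n
  induction n with
  | zero =>
    refine ⟨le_of_eq hq0.symm, ?_⟩
    rw [hq0, hq1]
    exact_mod_cast ha 1
  | succ k ih =>
    obtain ⟨h1, h2⟩ := ih
    have h1' : 1 ≤ q (k + 1) := le_trans h1 h2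
    refine ⟨h1', ?_⟩
    have hr := hqrec (k + 1) (Nat.le_add_left 1 k)
    simp only [Nat.add_sub_cancel] at hr
    rw [hr]
    have hcast : (1 : ℝ) ≤ (a (k + 2) : ℝ) := by exact_mod_cast ha (k + 2)
    nlinarith

lemma q_one_le (ha : ∀ n, 1 ≤ a n) (hq0 : q 0 = 1) (hq1 : q 1 = (a 1 : ℝ))
    (hqrec : ∀ n, 1 ≤ n → q (n + 1) = (a (n + 1) : ℝ) * q n + q (n - 1)) :
    ∀ n, 1 ≤ q n := fun n => (q_base ha hq0 hq1 hqrec n).1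

lemma q_mono (ha : ∀ n, 1 ≤ a n) (hq0 : q 0 = 1) (hq1 : q 1 = (a 1 : ℝ))
    (hqrec : ∀ n, 1 ≤ n → q (n + 1) = (a (n + 1) : ℝ) * q n + q (n - 1)) :
    Monotone q :=
  monotone_nat_of_le_succ (fun n => (q_base ha hq0 hq1 hqrec n).2)

lemma q_ge (ha : ∀ n, 1 ≤ a n) (hq0 : q 0 = 1) (hq1 : q 1 = (a 1 : ℝ))
    (hqrec : ∀ n, 1 ≤ n → q (n + 1) = (a (n + 1) : ℝ) * q n + q (n - 1)) :
    ∀ n : ℕ, (n : ℝ) ≤ q n := by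
  have key : ∀ n : ℕ, ((n : ℝ) + 1) ≤ q (n + 1) := by
    intro n
    induction n with
    | zero =>
      simpa [hq1] using q_one_le ha hq0 hq1 hqrec 1
    | succ k ih =>
      have hr := hqrec (k + 1) (Nat.le_add_left 1 k)
      simp only [Nat.add_sub_cancel] at hr
      have h1 : 1 ≤ q k := q_one_le ha hq0 hq1 hqrec k
      have h1' : 1 ≤ q (k + 1) := q_one_le ha hq0 hq1 hqrec (k + 1)
      have hcast : (1 : ℝ) ≤ (a (k + 2) : ℝ) := by exact_mod_cast ha (k + 2)
      rw [hr]
      push_cast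
      nlinarith
  intro n
  cases n with
  | zero => simp [hq0]
  | succ k => simpa [Nat.cast_succ] using key k

lemma W_nonneg (ha : ∀ n, 1 ≤ a n) (hq0 : q 0 = 1) (hq1 : q 1 = (a 1 : ℝ))
    (hqrec : ∀ n, 1 ≤ n → q (n + 1) = (a (n + 1) : ℝ) * q n + q (n - 1)) :
    ∀ n, 0 ≤ Wseq q n := by
  intro n
  have h1 : 1 ≤ q n := q_one_le ha hq0 hq1 hqrec n
  have h1' : 1 ≤ q (n + 1) := q_one_le ha hq0 hq1 hqrec (n + 1)
  have hmono : q n ≤ q (n + 1) := q_mono ha hq0 hq1 hqrec (Nat.le_succ n)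
  rcases eq_or_lt_of_le h1 with heq | hlt
  · -- q n = 1, log = 0
    have hlog : Real.log (q n) = 0 := by rw [← heq, Real.log_one]
    have hcond : ¬ q (n + 1) < 2 * q n * Real.log (q n) := by
      rw [hlog]; simp; linarith
    rw [Wseq, if_neg hcond, hlog, div_zero]
  · have hlog : 0 < Real.log (q n) := Real.log_pos hlt
    rw [Wseq]
    split_ifs with h
    · apply div_nonneg _ hlog.le
      have := Real.log_le_log (by linarith) hmono
      linarith
    · exact div_nonneg (le_trans zero_le_one (le_max_left _ _)) hlog.le

set_option maxHeartbeats 1000000 in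
lemma W_key (ha : ∀ n, 1 ≤ a n) (hq0 : q 0 = 1) (hq1 : q 1 = (a 1 : ℝ))
    (hqrec : ∀ n, 1 ≤ n → q (n + 1) = (a (n + 1) : ℝ) * q n + q (n - 1)) :
    ∀ n, 3 ≤ n → a (n + 1) = 1 → Wseq q n ≤ 4 * Wseq q (n + 1) := by
  intro n hn h1
  have hn3 : (3 : ℝ) ≤ (n : ℝ) := by exact_mod_cast hn
  have hq3 : (3 : ℝ) ≤ q n := le_trans hn3 (q_ge ha hq0 hq1 hqrec n)
  have hqpos : (0 : ℝ) < q n := by linarith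
  have hexp3 : Real.exp 1 < 3 := lt_of_lt_of_le Real.exp_one_lt_d9 (by norm_num)
  have hlog : 1 < Real.log (q n) := by
    refine (Real.lt_log_iff_exp_lt (by linarith)).mpr ?_
    calc Real.exp 1 < 3 := hexp3
      _ ≤ q n := hq3
  have hrec : q (n + 1) = q n + q (n - 1) := by
    have hr := hqrec n (by omega)
    rw [h1] at hr
    simpa using hr
  have hmono1 : q (n - 1) ≤ q n := q_mono ha hq0 hq1 hqrec (Nat.sub_le n 1)
  have h1q : (1 : ℝ) ≤ q (n - 1) := q_one_le ha hq0 hq1 hqrec (n - 1)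
  have hub : q (n + 1) ≤ 2 * q n := by rw [hrec]; linarith
  have hlbq : q n + 1 ≤ q (n + 1) := by rw [hrec]; linarith
  have hcond : q (n + 1) < 2 * q n * Real.log (q n) := by nlinarith
  have hWn : Wseq q n = (Real.log (q (n + 1)) - Real.log (q n)) / Real.log (q n) := by
    rw [Wseq, if_pos hcond]
  -- upper bound on Wseq q n
  have hlogub : Real.log (q (n + 1)) ≤ Real.log 2 + Real.log (q n) := by
    have := Real.log_le_log (by linarith) hub
    rwa [Real.log_mul (by norm_num) (ne_of_gt hqpos)] at this
  have hWnub : Wseq q n ≤ Real.log 2 / Real.log (q n) := by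
    rw [hWn]
    exact (div_le_div_iff_of_pos_right (by linarith)).mpr (by linarith)
  -- lower bound on Wseq q (n+1)
  have hq1pos : (3 : ℝ) ≤ q (n + 1) := by linarith
  have hLpos : 1 < Real.log (q (n + 1)) := by
    refine (Real.lt_log_iff_exp_lt (by linarith)).mpr ?_
    calc Real.exp 1 < 3 := hexp3
      _ ≤ q (n + 1) := hq1pos
  set L := Real.log (q (n + 1)) with hL
  have hrec2 : q (n + 2) = (a (n + 2) : ℝ) * q (n + 1) + q n := by
    have hr := hqrec (n + 1) (Nat.le_add_left 1 n)
    simpa using hr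
  have hcast2 : (1 : ℝ) ≤ (a (n + 2) : ℝ) := by exact_mod_cast ha (n + 2)
  have hq2 : (3 / 2 : ℝ) * q (n + 1) ≤ q (n + 2) := by
    rw [hrec2]
    nlinarith
  have hlog32pos : 0 < Real.log (3 / 2) := Real.log_pos (by norm_num)
  have hlog32lt : Real.log (3 / 2 : ℝ) < 1 := by
    refine (Real.log_lt_iff_lt_exp (by norm_num)).mpr ?_
    calc (3 / 2 : ℝ) < 2.7182818283 := by norm_num
      _ < Real.exp 1 := Real.exp_one_gt_d9
  have hW1 : Real.log (3 / 2) / L ≤ Wseq q (n + 1) := by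
    rw [Wseq]
    split_ifs with h
    · have hlq2 : Real.log ((3 / 2 : ℝ) * q (n + 1)) ≤ Real.log (q (n + 2)) :=
        Real.log_le_log (by nlinarith) hq2
      rw [Real.log_mul (by norm_num) (by nlinarith)] at hlq2
      exact (div_le_div_iff_of_pos_right (by linarith)).mpr (by linarith)
    · refine le_trans ?_ ((div_le_div_iff_of_pos_right (by linarith)).mpr (le_max_left 1 _))
      exact (div_le_div_iff_of_pos_right (by linarith)).mpr hlog32lt.le
  have hlog2le : Real.log 2 ≤ Real.log (q n) :=
    Real.log_le_log (by norm_num) (by linarith)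
  have hL2 : L ≤ 2 * Real.log (q n) := by
    rw [hL]
    linarith
  have h94 : Real.log 2 ≤ 2 * Real.log (3 / 2) := by
    have hp : Real.log ((3 / 2 : ℝ) ^ 2) = 2 * Real.log (3 / 2) := by
      rw [Real.log_pow]; norm_num
    rw [← hp]
    exact Real.log_le_log (by norm_num) (by norm_num)
  have hlqpos : (0 : ℝ) < Real.log (q n) := by linarith
  have hLpos' : (0 : ℝ) < L := by linarith
  have h2nn : (0 : ℝ) ≤ Real.log 2 := Real.log_nonneg (by norm_num)
  have hmid : Real.log 2 / Real.log (q n) ≤ 4 * Real.log (3 / 2) / L := by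
    rw [div_le_div_iff₀ hlqpos hLpos']
    have t1 := mul_le_mul_of_nonneg_left hL2 h2nn
    have t2 := mul_le_mul_of_nonneg_right h94 hlqpos.le
    nlinarith [t1, t2]
  calc Wseq q n ≤ Real.log 2 / Real.log (q n) := hWnub
    _ ≤ 4 * Real.log (3 / 2) / L := hmid
    _ = 4 * (Real.log (3 / 2) / L) := by ring
    _ ≤ 4 * Wseq q (n + 1) := by linarith

end Aux

/-- If `∑ W_n = ∞` and `𝒟 = {n : a_{n+1} = 1 ∧ a n ≠ 1}`, then `∑_{n ∈ 𝒟ᶜ} W_n = ∞`. -/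
theorem Wseq_divergence_off_D (a : ℕ → ℕ) (ha : ∀ n, 1 ≤ a n)
    (q : ℕ → ℝ) (hq0 : q 0 = 1) (hq1 : q 1 = a 1)
    (hqrec : ∀ n, 1 ≤ n → q (n + 1) = (a (n + 1) : ℝ) * q n + q (n - 1))
    (hdiv : Tendsto (fun N => ∑ n ∈ Finset.range N, Wseq q n) atTop atTop) :
    Tendsto
      (fun N => ∑ n ∈ (Finset.range N).filter (fun n => ¬(a (n + 1) = 1 ∧ a n ≠ 1)),
        Wseq q n) atTop atTop := by
  have hWnn : ∀ n, 0 ≤ Wseq q n := W_nonneg ha hq0 hq1 hqrec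
  have hkey := W_key ha hq0 hq1 hqrec
  set C : ℝ := ∑ n ∈ Finset.range 3, Wseq q n with hC
  set T : ℕ → ℝ := fun N =>
    ∑ n ∈ (Finset.range N).filter (fun n => ¬(a (n + 1) = 1 ∧ a n ≠ 1)), Wseq q n with hT
  have hmain : ∀ N, ∑ n ∈ Finset.range N, Wseq q n ≤ 5 * T (N + 1) + C := by
    intro N
    have hsplit := Finset.sum_filter_add_sum_filter_not (Finset.range N)
      (fun n => a (n + 1) = 1 ∧ a n ≠ 1) (Wseq q)
    have hTmono : T N ≤ T (N + 1) :=
      Finset.sum_le_sum_of_subset_of_nonneg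
        (Finset.filter_subset_filter _ (Finset.range_subset_range.mpr (Nat.le_succ N)))
        (fun i _ _ => hWnn i)
    set F := (Finset.range N).filter (fun n => a (n + 1) = 1 ∧ a n ≠ 1) with hF
    have hsplit2 := Finset.sum_filter_add_sum_filter_not F (fun n => n < 3) (Wseq q)
    have hsmall : ∑ n ∈ F.filter (fun n => n < 3), Wseq q n ≤ C := by
      refine Finset.sum_le_sum_of_subset_of_nonneg ?_ (fun i _ _ => hWnn i)
      intro x hx
      simp only [hF, Finset.mem_filter, Finset.mem_range] at hx ⊢
      exact hx.2
    have hbig : ∑ n ∈ F.filter (fun n => ¬ n < 3), Wseq q n ≤ 4 * T (N + 1) := by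
      have step1 : ∑ n ∈ F.filter (fun n => ¬ n < 3), Wseq q n
          ≤ ∑ n ∈ F.filter (fun n => ¬ n < 3), 4 * Wseq q (n + 1) := by
        refine Finset.sum_le_sum (fun i hi => ?_)
        simp only [hF, Finset.mem_filter, Finset.mem_range] at hi
        exact hkey i (by omega) hi.1.2.1
      have step2 : ∑ n ∈ F.filter (fun n => ¬ n < 3), 4 * Wseq q (n + 1)
          = 4 * ∑ m ∈ (F.filter (fun n => ¬ n < 3)).image (· + 1), Wseq q m := by
        rw [Finset.sum_image (by intro x _ y _ h; simp only at h; omega), Finset.mul_sum]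
      have step3 : ∑ m ∈ (F.filter (fun n => ¬ n < 3)).image (· + 1), Wseq q m
          ≤ T (N + 1) := by
        refine Finset.sum_le_sum_of_subset_of_nonneg ?_ (fun i _ _ => hWnn i)
        intro m hm
        simp only [hF, Finset.mem_image, Finset.mem_filter, Finset.mem_range] at hm
        obtain ⟨n, ⟨⟨hnN, hP1, hP2⟩, hn3⟩, rfl⟩ := hm
        simp only [hT, Finset.mem_filter, Finset.mem_range]
        refine ⟨by omega, ?_⟩
        rintro ⟨-, hbad⟩
        exact hbad hP1
      calc ∑ n ∈ F.filter (fun n => ¬ n < 3), Wseq q n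
          ≤ 4 * ∑ m ∈ (F.filter (fun n => ¬ n < 3)).image (· + 1), Wseq q m := by
            rw [← step2]; exact step1
        _ ≤ 4 * T (N + 1) := by linarith [step3]
    have hTN : ∑ n ∈ (Finset.range N).filter
        (fun n => ¬(a (n + 1) = 1 ∧ a n ≠ 1)), Wseq q n = T N := rfl
    linarith [hsplit, hsplit2, hsmall, hbig, hTmono]
  have h2 : Tendsto (fun N => ((∑ n ∈ Finset.range N, Wseq q n) + (-C)) / 5) atTop atTop :=
    (Filter.tendsto_atTop_add_const_right _ (-C) hdiv).atTop_div_const (by norm_num)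
  have h3 : Tendsto (fun N => T (N + 1)) atTop atTop := by
    refine Filter.tendsto_atTop_mono (fun N => ?_) h2
    have := hmain N
    linarith
  exact (Filter.tendsto_add_atTop_iff_nat (f := T) 1).mp h3
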